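/- Let n ≥ 1 and let H be the unweighted hypergraph on the 2n vertices v_1, …, v_{2n} whose hyperedges are e_i = {v_i, v_{n+1}, v_{n+2}, …, v_{2n}} for i = 1, …, n (each of weight 1). Then for every ε ∈ (0,1), every (1±ε)-approximate cut sparsifier Ĥ = (V, Ê, ŵ) of H satisfies Ê = E; that is, the sparsifier must contain all n hyperedges. -/

import Mathlib

open Finset
open scoped Classical

/-- A hyperedge `e` crosses the cut `S` if it has at least one vertex in `S` and at least
one vertex outside `S`. -/
def hCrosses {V E : Type} (he : E → Finset V) (S : Finset V) (e : E) : Prop :=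
  ((he e) ∩ S).Nonempty ∧ ((he e) \ S).Nonempty

/-- The weight of the cut `S` in the weighted hypergraph `(V, E, w)`. -/
noncomputable def hCutWt {V E : Type} [Fintype E] (he : E → Finset V) (w : E → ℝ)
    (S : Finset V) : ℝ :=
  ∑ e : E, if hCrosses he S e then w e else 0

/-- The sunflower hypergraph on `2n` vertices `v_0, …, v_{2n-1}` with the `n`
unit-weight hyperedges `e_i = {v_i} ∪ {v_n, …, v_{2n-1}}`, `i = 0, …, n-1`: every
`(1 ± ε)`-approximate cut sparsifier of it (for `ε ∈ (0,1)`) must contain all `n` hyperedges. -/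
theorem stmt1 (n : ℕ) (hn : 1 ≤ n)
    (he : Fin n → Finset (Fin (2 * n)))
    (hhe : ∀ i : Fin n, he i =
      Finset.univ.filter (fun v : Fin (2 * n) => v.val = i.val ∨ n ≤ v.val))
    (ε : ℝ) (hε0 : 0 < ε) (hε1 : ε < 1)
    (Ehat : Finset (Fin n)) (what : Fin n → ℝ) (hwhat : ∀ e, 0 ≤ what e)
    (hsp : ∀ S : Finset (Fin (2 * n)), S.Nonempty → S ≠ Finset.univ →
      |(∑ e ∈ Ehat, if hCrosses he S e then what e else 0) -
          hCutWt he (fun _ => (1 : ℝ)) S|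
        ≤ ε * hCutWt he (fun _ => (1 : ℝ)) S) :
    Ehat = Finset.univ := by

  rw [Finset.eq_univ_iff_forall]
  intro i
  by_contra hi
  have hin : (i.val : ℕ) < 2 * n := lt_of_lt_of_le i.isLt (by omega)
  set vi : Fin (2*n) := ⟨i.val, hin⟩ with hvi
  set vn : Fin (2*n) := ⟨n, by omega⟩ with hvn
  set S : Finset (Fin (2*n)) := {vi} with hS
  have hvn_ne : vn ≠ vi := by
    simp [hvn, hvi, Fin.ext_iff]
    omega
  have hcross : ∀ e : Fin n, hCrosses he S e ↔ e = i := by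
    intro e
    constructor
    · rintro ⟨⟨x, hx⟩, -⟩
      simp only [Finset.mem_inter, hS, Finset.mem_singleton] at hx
      obtain ⟨hx1, hx2⟩ := hx
      subst hx2
      rw [hhe e, Finset.mem_filter] at hx1
      have := hx1.2
      simp [hvi] at this
      have hlt : i.val < n := i.isLt
      apply Fin.ext
      omega
    · rintro rfl
      constructor
      · refine ⟨vi, ?_⟩
        simp only [Finset.mem_inter, hhe e, Finset.mem_filter]
        simp [hS, hvi]
      · refine ⟨vn, ?_⟩
        simp only [Finset.mem_sdiff, hhe e, Finset.mem_filter]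
        simp [hS, hvn_ne, hvn]
        exact hvn_ne
  have hcut : hCutWt he (fun _ => (1 : ℝ)) S = 1 := by
    unfold hCutWt
    rw [Finset.sum_congr rfl (fun e _ => by
      rw [if_congr (hcross e) rfl rfl])]
    simp
  have hsum : (∑ e ∈ Ehat, if hCrosses he S e then what e else 0) = 0 := by
    apply Finset.sum_eq_zero
    intro e heE
    rw [if_neg]
    rw [hcross e]
    rintro rfl
    exact hi heE
  have hSne : S.Nonempty := ⟨vi, by simp [hS]⟩
  have hSnu : S ≠ Finset.univ := by
    intro h
    have : vn ∈ S := h ▸ Finset.mem_univ vn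
    rw [hS, Finset.mem_singleton] at this
    exact hvn_ne this
  have := hsp S hSne hSnu
  rw [hsum, hcut] at this
  simp at this
  linarith
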